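/- Let d ≥ 1 and let j : (0,∞) → [0,∞) be nonincreasing with ∫_{ℝ^d} min{1,|x|²} j(|x|) dx < ∞. Suppose there exist C > 0, R > e, α > 0 such that s^{d+2}·j(s) ≤ C·(log s / log r)^{1+α}·r^{d+2}·j(r) for all R ≤ r ≤ s. Then there exist C' > 0 and R' > 0 such that λ(r) ≤ C'·r^d·j(r) for all r ≥ R'. -/

import Mathlib

open MeasureTheory Metric ENNReal

/-- Tail `λ(r) = ∫_{ℝ^d ∖ B(0,r)} j(|x|) dx` in `ℝ^d`. -/
noncomputable def tailLam (d : ℕ) (j : ℝ → ℝ) (r : ℝ) : ℝ≥0∞ :=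
  ∫⁻ x in (Metric.ball (0 : EuclideanSpace ℝ (Fin d)) r)ᶜ,
    ENNReal.ofReal (j ‖x‖)

set_option maxHeartbeats 1000000 in
theorem stmt5 (d : ℕ) (hd : 1 ≤ d) (j : ℝ → ℝ)
    (hnonneg : ∀ r : ℝ, 0 < r → 0 ≤ j r)
    (hmono : AntitoneOn j (Set.Ioi (0 : ℝ)))
    (hLK : (∫⁻ x : EuclideanSpace ℝ (Fin d),
      ENNReal.ofReal (min 1 (‖x‖ ^ 2) * j ‖x‖)) < ⊤)
    (C R α : ℝ) (hC : 0 < C) (hR : Real.exp 1 < R) (hα : 0 < α)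
    (hscale : ∀ r s : ℝ, R ≤ r → r ≤ s →
      s ^ (d + 2) * j s ≤
        C * (Real.log s / Real.log r) ^ (1 + α) * (r ^ (d + 2) * j r)) :
    ∃ C' R' : ℝ, 0 < C' ∧ 0 < R' ∧ ∀ r : ℝ, R' ≤ r →
      tailLam d j r ≤ ENNReal.ofReal (C' * (r ^ d * j r)) := by
  classical
  have hdpos : 0 < d := hd
  haveI : Nontrivial (EuclideanSpace ℝ (Fin d)) := by
    have : 0 < Module.finrank ℝ (EuclideanSpace ℝ (Fin d)) := by
      rw [finrank_euclideanSpace_fin]; exact hdpos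
    exact Module.nontrivial_of_finrank_pos this
  set n : ℕ := ⌈1 + α⌉₊ with hn
  -- geometric-type series
  set g : ℕ → ℝ := fun k => ((k : ℝ) + 1) ^ n * (1 / 4 : ℝ) ^ k with hgdef
  have hgnonneg : ∀ k, 0 ≤ g k := fun k => by positivity
  have hg : Summable g := by
    have h4 : ‖(1 / 4 : ℝ)‖ < 1 := by
      rw [Real.norm_eq_abs, abs_of_nonneg (by norm_num : (0:ℝ) ≤ 1/4)]; norm_num
    have hs0 : Summable (fun m : ℕ => (m : ℝ) ^ n * (1 / 4 : ℝ) ^ m) :=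
      summable_pow_mul_geometric_of_norm_lt_one n h4
    have hs1 := (summable_nat_add_iff
      (f := fun m : ℕ => (m : ℝ) ^ n * (1 / 4 : ℝ) ^ m) 1).mpr hs0
    have := hs1.mul_left 4
    refine this.congr fun k => ?_
    push_cast
    ring
  set S : ℝ := ∑' k, g k with hS
  have hSpos : 0 < S := by
    have h1 : g 0 ≤ S := Summable.le_tsum hg 0 fun i _ => hgnonneg i
    have : g 0 = 1 := by simp [hgdef]
    linarith
  set κ : ℝ≥0∞ := volume (ball (0 : EuclideanSpace ℝ (Fin d)) 1) with hκ
  have hκpos : 0 < κ := measure_ball_pos _ _ one_pos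
  have hκlt : κ < ⊤ := measure_ball_lt_top
  have hκt : 0 < κ.toReal := ENNReal.toReal_pos hκpos.ne' hκlt.ne
  refine ⟨C * 2 ^ d * S * κ.toReal, R, by positivity, lt_trans (Real.exp_pos 1) hR, ?_⟩
  intro r hr
  have hr0 : 0 < r := lt_of_lt_of_le (lt_trans (Real.exp_pos 1) hR) hr
  have hlogr : 1 < Real.log r := by
    rw [show (1 : ℝ) = Real.log (Real.exp 1) by rw [Real.log_exp]]
    exact Real.log_lt_log (Real.exp_pos 1) (lt_of_lt_of_le hR hr)
  have hjr : 0 ≤ j r := hnonneg r hr0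
  set A : ℕ → Set (EuclideanSpace ℝ (Fin d)) := fun k =>
    ball 0 (2 ^ (k + 1) * r) \ ball 0 (2 ^ k * r) with hA
  -- covering
  have cover : (ball (0 : EuclideanSpace ℝ (Fin d)) r)ᶜ ⊆ ⋃ k, A k := by
    intro x hx
    have hxr : r ≤ ‖x‖ := by
      simpa [mem_ball, dist_zero_right, not_lt] using hx
    have hx1 : 1 ≤ ‖x‖ / r := (one_le_div hr0).2 hxr
    obtain ⟨k, hk1, hk2⟩ := exists_nat_pow_near hx1 (one_lt_two (α := ℝ))
    refine Set.mem_iUnion.2 ⟨k, ?_, ?_⟩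
    · simp only [mem_ball, dist_zero_right]
      calc ‖x‖ = (‖x‖ / r) * r := by field_simp
        _ < 2 ^ (k + 1) * r := by
            exact mul_lt_mul_of_pos_right hk2 hr0
    · simp only [mem_ball, dist_zero_right, not_lt]
      calc (2 : ℝ) ^ k * r ≤ (‖x‖ / r) * r := mul_le_mul_of_nonneg_right hk1 hr0.le
        _ = ‖x‖ := by field_simp
  -- key real estimate
  have kb : ∀ k : ℕ, j (2 ^ k * r) * (2 ^ (k + 1) * r) ^ d ≤
      (C * 2 ^ d * (r ^ d * j r)) * g k := by
    intro k
    have h2k : (1 : ℝ) ≤ 2 ^ k := one_le_pow₀ (by norm_num)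
    have hsr : r ≤ 2 ^ k * r := le_mul_of_one_le_left hr0.le h2k
    have hspos : (0 : ℝ) < 2 ^ k * r := by positivity
    have h1 := hscale r (2 ^ k * r) hr hsr
    have hlogs : Real.log (2 ^ k * r) = k * Real.log 2 + Real.log r := by
      rw [Real.log_mul (by positivity) hr0.ne', Real.log_pow]
    have hlog2 : Real.log 2 ≤ 1 := by
      have := Real.log_le_sub_one_of_pos (by norm_num : (0:ℝ) < 2)
      linarith
    have hlog2' : 0 ≤ Real.log 2 := Real.log_nonneg one_le_two
    have hratio : Real.log (2 ^ k * r) / Real.log r ≤ (k : ℝ) + 1 := by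
      rw [div_le_iff₀ (by linarith : (0:ℝ) < Real.log r), hlogs]
      have h1' : (k : ℝ) * Real.log 2 ≤ (k : ℝ) * Real.log r := by
        apply mul_le_mul_of_nonneg_left (by linarith) (Nat.cast_nonneg k)
      nlinarith
    have hratio0 : 0 ≤ Real.log (2 ^ k * r) / Real.log r := by
      apply div_nonneg _ (by linarith)
      rw [hlogs]; positivity
    have hrp : (Real.log (2 ^ k * r) / Real.log r) ^ (1 + α) ≤ ((k : ℝ) + 1) ^ n := by
      calc (Real.log (2 ^ k * r) / Real.log r) ^ (1 + α)
          ≤ ((k : ℝ) + 1) ^ (1 + α) :=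
            Real.rpow_le_rpow hratio0 hratio (by linarith)
        _ ≤ ((k : ℝ) + 1) ^ (n : ℝ) := by
            apply Real.rpow_le_rpow_of_exponent_le
            · have : (0:ℝ) ≤ (k:ℝ) := Nat.cast_nonneg k
              linarith
            · exact Nat.le_ceil (1 + α)
        _ = ((k : ℝ) + 1) ^ n := Real.rpow_natCast _ n
    have h2 : (2 ^ k * r) ^ (d + 2) * j (2 ^ k * r) ≤
        C * ((k : ℝ) + 1) ^ n * (r ^ (d + 2) * j r) := by
      refine h1.trans ?_
      have hx : 0 ≤ r ^ (d + 2) * j r := by positivity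
      exact mul_le_mul_of_nonneg_right (mul_le_mul_of_nonneg_left hrp hC.le) hx
    have hb : (0:ℝ) ≤ (2 ^ (k + 1) * r) ^ d := by positivity
    have hfinal : (2 ^ k * r) ^ (d + 2) * (j (2 ^ k * r) * (2 ^ (k + 1) * r) ^ d) ≤
        (2 ^ k * r) ^ (d + 2) * ((C * 2 ^ d * (r ^ d * j r)) * g k) := by
      calc (2 ^ k * r) ^ (d + 2) * (j (2 ^ k * r) * (2 ^ (k + 1) * r) ^ d)
          = ((2 ^ k * r) ^ (d + 2) * j (2 ^ k * r)) * (2 ^ (k + 1) * r) ^ d := by ring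
        _ ≤ (C * ((k : ℝ) + 1) ^ n * (r ^ (d + 2) * j r)) * (2 ^ (k + 1) * r) ^ d :=
            mul_le_mul_of_nonneg_right h2 hb
        _ = (2 ^ k * r) ^ (d + 2) * ((C * 2 ^ d * (r ^ d * j r)) * g k) := by
            simp only [hgdef]
            rw [show (1/4 : ℝ) = (1/2) * (1/2) by norm_num, mul_pow]
            field_simp
            ring_nf
            rw [show (2:ℝ) ^ (k * 2) = 4 ^ k by rw [Nat.mul_comm, pow_mul]; norm_num]
            have h4 : (1/4:ℝ) ^ k * 4 ^ k = 1 := by rw [← mul_pow]; norm_num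
            linear_combination (-(r ^ 2 * r ^ d * j r * 2 ^ d * 2 ^ (d * k))) * h4
    exact le_of_mul_le_mul_left hfinal (by positivity)
  -- ENNReal chain
  have step1 : tailLam d j r ≤ ∑' k, ∫⁻ x in A k, ENNReal.ofReal (j ‖x‖) := by
    refine le_trans (lintegral_mono_set cover) ?_
    exact lintegral_iUnion_le _ _
  have step2 : ∀ k : ℕ, (∫⁻ x in A k, ENNReal.ofReal (j ‖x‖)) ≤
      ENNReal.ofReal (j (2 ^ k * r) * (2 ^ (k + 1) * r) ^ d) * κ := by
    intro k
    have hspos : (0 : ℝ) < 2 ^ k * r := by positivity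
    have hmeas : MeasurableSet (A k) := measurableSet_ball.diff measurableSet_ball
    have hjk : 0 ≤ j (2 ^ k * r) := hnonneg _ hspos
    calc (∫⁻ x in A k, ENNReal.ofReal (j ‖x‖))
        ≤ ∫⁻ _x in A k, ENNReal.ofReal (j (2 ^ k * r)) := by
          refine setLIntegral_mono' hmeas fun x hx => ?_
          apply ENNReal.ofReal_le_ofReal
          have hxge : 2 ^ k * r ≤ ‖x‖ := by
            have := hx.2
            simpa [mem_ball, dist_zero_right, not_lt] using this
          exact hmono (Set.mem_Ioi.2 hspos) (Set.mem_Ioi.2 (lt_of_lt_of_le hspos hxge)) hxge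
      _ = ENNReal.ofReal (j (2 ^ k * r)) * volume (A k) := setLIntegral_const _ _
      _ ≤ ENNReal.ofReal (j (2 ^ k * r)) *
            volume (ball (0 : EuclideanSpace ℝ (Fin d)) (2 ^ (k + 1) * r)) := by
          gcongr
          exact Set.diff_subset
      _ = ENNReal.ofReal (j (2 ^ k * r)) * (ENNReal.ofReal ((2 ^ (k + 1) * r) ^ d) * κ) := by
          rw [Measure.addHaar_ball volume _ (by positivity : (0:ℝ) ≤ 2 ^ (k + 1) * r)]
          rw [finrank_euclideanSpace_fin]
      _ = ENNReal.ofReal (j (2 ^ k * r) * (2 ^ (k + 1) * r) ^ d) * κ := by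
          rw [ENNReal.ofReal_mul hjk, mul_assoc]
  calc tailLam d j r
      ≤ ∑' k, ∫⁻ x in A k, ENNReal.ofReal (j ‖x‖) := step1
    _ ≤ ∑' k, ENNReal.ofReal (j (2 ^ k * r) * (2 ^ (k + 1) * r) ^ d) * κ :=
        ENNReal.tsum_le_tsum step2
    _ ≤ ∑' k, ENNReal.ofReal ((C * 2 ^ d * (r ^ d * j r)) * g k) * κ := by
        refine ENNReal.tsum_le_tsum fun k => ?_
        exact mul_le_mul_left (ENNReal.ofReal_le_ofReal (kb k)) κ
    _ = (∑' k, ENNReal.ofReal (C * 2 ^ d * (r ^ d * j r)) * ENNReal.ofReal (g k)) * κ := by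
        rw [ENNReal.tsum_mul_right]
        congr 1
        refine tsum_congr fun k => ?_
        rw [ENNReal.ofReal_mul (by positivity)]
    _ = ENNReal.ofReal (C * 2 ^ d * (r ^ d * j r)) * ENNReal.ofReal S * κ := by
        rw [ENNReal.tsum_mul_left, ENNReal.ofReal_tsum_of_nonneg hgnonneg hg]
    _ = ENNReal.ofReal (C * 2 ^ d * S * κ.toReal * (r ^ d * j r)) := by
        have heq : ENNReal.ofReal (C * 2 ^ d * S * κ.toReal * (r ^ d * j r))
            = ENNReal.ofReal (C * 2 ^ d * (r ^ d * j r)) * ENNReal.ofReal S *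
              ENNReal.ofReal κ.toReal := by
          rw [← ENNReal.ofReal_mul (by positivity), ← ENNReal.ofReal_mul (by positivity)]
          congr 1
          ring
        rw [heq, ENNReal.ofReal_toReal hκlt.ne]
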